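/- Let c(α) := ∫₀¹ erf(√(α/(8t))) dt for α > 0. Then lim_{α → 0⁺} c(α)/√α = √(2/π); that is, c(α) ∼ √(2α/π) as α → 0⁺. -/

import Mathlib

open MeasureTheory Filter

/-- The error function `erf x = (2/√π) ∫_0^x e^{-s²} ds`. -/
noncomputable def erf (x : ℝ) : ℝ :=
  (2 / Real.sqrt Real.pi) * ∫ s in (0:ℝ)..x, Real.exp (-s ^ 2)

/-- `c(α) = ∫_0^1 erf(√(α/(8t))) dt`. -/
noncomputable def cFun (α : ℝ) : ℝ :=
  ∫ t in (0:ℝ)..1, erf (Real.sqrt (α / (8 * t)))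

noncomputable def erf0 (x : ℝ) : ℝ := ∫ s in (0:ℝ)..x, Real.exp (-s ^ 2)

lemma expsq_cont : Continuous (fun s : ℝ => Real.exp (-s ^ 2)) := by continuity

lemma erf0_hasDeriv (x : ℝ) : HasDerivAt erf0 (Real.exp (-x ^ 2)) x :=
  intervalIntegral.integral_hasDerivAt_right
    (expsq_cont.intervalIntegrable 0 x)
    (expsq_cont.stronglyMeasurableAtFilter _ _)
    expsq_cont.continuousAt

lemma erf0_continuous : Continuous erf0 :=
  continuous_iff_continuousAt.2 fun x => (erf0_hasDeriv x).continuousAt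

lemma erf_eq (x : ℝ) : erf x = (2 / Real.sqrt Real.pi) * erf0 x := rfl

lemma erf_continuous : Continuous erf :=
  continuous_const.mul erf0_continuous

lemma erf0_div_tendsto : Tendsto (fun x => erf0 x / x) (nhdsWithin 0 (Set.Ioi 0)) (nhds 1) := by
  have h := (hasDerivAt_iff_tendsto_slope.1 (erf0_hasDeriv 0))
  rw [show Real.exp (-(0:ℝ) ^ 2) = 1 by norm_num] at h
  have h2 : Tendsto (slope erf0 0) (nhdsWithin 0 (Set.Ioi 0)) (nhds 1) :=
    h.mono_left (nhdsWithin_mono _ (by intro x hx; exact ne_of_gt hx))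
  refine h2.congr fun x => ?_
  simp [slope, erf0, intervalIntegral.integral_same, div_eq_inv_mul]

lemma erf_div_tendsto :
    Tendsto (fun x => erf x / x) (nhdsWithin 0 (Set.Ioi 0)) (nhds (2 / Real.sqrt Real.pi)) := by
  have h := erf0_div_tendsto.const_mul (2 / Real.sqrt Real.pi)
  rw [mul_one] at h
  refine h.congr fun x => ?_
  rw [erf_eq, mul_div_assoc]

lemma erf0_nonneg {x : ℝ} (hx : 0 ≤ x) : 0 ≤ erf0 x :=
  intervalIntegral.integral_nonneg hx (fun u _ => (Real.exp_pos _).le)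

lemma erf0_le {x : ℝ} (hx : 0 ≤ x) : erf0 x ≤ x := by
  have h : erf0 x ≤ ∫ _ in (0:ℝ)..x, (1:ℝ) := by
    apply intervalIntegral.integral_mono_on hx (expsq_cont.intervalIntegrable 0 x)
      intervalIntegrable_const
    intro u _
    show Real.exp (-u ^ 2) ≤ 1
    exact Real.exp_le_one_iff.mpr (by nlinarith)
  simpa using h

lemma sqrtpi_pos : 0 < Real.sqrt Real.pi := Real.sqrt_pos.2 Real.pi_pos

lemma erf_nonneg {x : ℝ} (hx : 0 ≤ x) : 0 ≤ erf x := by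
  rw [erf_eq]
  exact mul_nonneg (by positivity) (erf0_nonneg hx)

lemma erf_le {x : ℝ} (hx : 0 ≤ x) : erf x ≤ 2 / Real.sqrt Real.pi * x := by
  rw [erf_eq]
  exact mul_le_mul_of_nonneg_left (erf0_le hx) (by positivity)

/-- the pointwise limit, for fixed `t > 0` -/
lemma pointwise_lim {t : ℝ} (ht : 0 < t) :
    Tendsto (fun α : ℝ => erf (Real.sqrt (α / (8 * t))) / Real.sqrt α)
      (nhdsWithin 0 (Set.Ioi 0)) (nhds (2 / Real.sqrt Real.pi / Real.sqrt (8 * t))) := by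
  have h8t : (0:ℝ) < 8 * t := by linarith
  -- the inner map α ↦ √(α/(8t)) tends to 0 within Ioi 0
  have hinner : Tendsto (fun α : ℝ => Real.sqrt (α / (8 * t)))
      (nhdsWithin 0 (Set.Ioi 0)) (nhdsWithin 0 (Set.Ioi 0)) := by
    rw [tendsto_nhdsWithin_iff]
    constructor
    · have hc : Continuous (fun α : ℝ => Real.sqrt (α / (8 * t))) :=
        Real.continuous_sqrt.comp (continuous_id.div_const _)
      have := hc.tendsto 0
      simp only [Real.sqrt_eq_zero', zero_div, Real.sqrt_zero] at this
      exact this.mono_left nhdsWithin_le_nhds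
    · filter_upwards [self_mem_nhdsWithin] with α (hα : 0 < α)
      exact Real.sqrt_pos.2 (div_pos hα h8t)
  have hcomp := (erf_div_tendsto.comp hinner).div_const (Real.sqrt (8 * t))
  refine hcomp.congr' ?_
  filter_upwards [self_mem_nhdsWithin] with α (hα : 0 < α)
  have hx : 0 < Real.sqrt (α / (8 * t)) := Real.sqrt_pos.2 (div_pos hα h8t)
  have hb : 0 < Real.sqrt (8 * t) := Real.sqrt_pos.2 h8t
  have hprod : Real.sqrt (α / (8 * t)) * Real.sqrt (8 * t) = Real.sqrt α := by
    rw [← Real.sqrt_mul (by positivity), div_mul_cancel₀ _ (ne_of_gt h8t)]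
  simp only [Function.comp]
  rw [div_div, hprod]

lemma bound_eq {t : ℝ} (ht : 0 < t) :
    2 / Real.sqrt Real.pi / Real.sqrt 8 * t ^ (-(1/2) : ℝ)
      = 2 / Real.sqrt Real.pi / Real.sqrt (8 * t) := by
  have hst : 0 < Real.sqrt t := Real.sqrt_pos.2 ht
  have hs8 : 0 < Real.sqrt 8 := Real.sqrt_pos.2 (by norm_num)
  rw [Real.rpow_neg ht.le, ← Real.sqrt_eq_rpow, Real.sqrt_mul (by norm_num : (0:ℝ) ≤ 8) t]
  field_simp

lemma bound_integrableOn :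
    IntegrableOn (fun t : ℝ => 2 / Real.sqrt Real.pi / Real.sqrt (8 * t))
      (Set.Ioc 0 1) volume := by
  have h : IntervalIntegrable (fun t : ℝ => t ^ (-(1/2) : ℝ)) volume 0 1 :=
    intervalIntegral.intervalIntegrable_rpow' (by norm_num)
  rw [intervalIntegrable_iff, Set.uIoc_of_le zero_le_one] at h
  have h2 : IntegrableOn
      (fun t : ℝ => 2 / Real.sqrt Real.pi / Real.sqrt 8 * t ^ (-(1/2) : ℝ))
      (Set.Ioc 0 1) volume := h.const_mul _
  refine h2.congr_fun ?_ measurableSet_Ioc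
  intro t ht
  exact bound_eq ht.1

theorem integral_bound :
    ∫ t in Set.Ioc (0:ℝ) 1, 2 / Real.sqrt Real.pi / Real.sqrt (8 * t)
      = Real.sqrt (2 / Real.pi) := by
  have key : ∀ t ∈ Set.Icc (0:ℝ) 1,
      2 / Real.sqrt Real.pi / Real.sqrt (8 * t)
        = 2 / Real.sqrt Real.pi / Real.sqrt 8 * t ^ (-(1/2) : ℝ) := by
    intro t ht
    rcases eq_or_lt_of_le ht.1 with h | h
    · rw [← h]
      simp [Real.zero_rpow (by norm_num : (-(1/2):ℝ) ≠ 0)]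
    · exact (bound_eq h).symm
  rw [← intervalIntegral.integral_of_le zero_le_one]
  rw [intervalIntegral.integral_congr (g := fun t =>
      2 / Real.sqrt Real.pi / Real.sqrt 8 * t ^ (-(1/2) : ℝ))
    (by rw [Set.uIcc_of_le zero_le_one]; exact fun t ht => key t ht)]
  rw [intervalIntegral.integral_const_mul, integral_rpow (Or.inl (by norm_num))]
  have h1 : ((1:ℝ)) ^ (-(1/2) + 1 : ℝ) = 1 := Real.one_rpow _
  have h0 : ((0:ℝ)) ^ (-(1/2) + 1 : ℝ) = 0 := Real.zero_rpow (by norm_num)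
  rw [h1, h0]
  have h8 : Real.sqrt 8 = 2 * Real.sqrt 2 := by
    rw [show (8:ℝ) = 2 ^ 2 * 2 by norm_num, Real.sqrt_mul (by positivity),
      Real.sqrt_sq (by norm_num)]
  have hsp : Real.sqrt (2 / Real.pi) = Real.sqrt 2 / Real.sqrt Real.pi :=
    Real.sqrt_div (by norm_num) _
  rw [h8, hsp]
  have h2 : Real.sqrt 2 ≠ 0 := by positivity
  have hp : Real.sqrt Real.pi ≠ 0 := ne_of_gt sqrtpi_pos
  have hs2 : Real.sqrt 2 * Real.sqrt 2 = 2 := Real.mul_self_sqrt (by norm_num)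
  field_simp
  nlinarith [hs2, sqrtpi_pos, Real.sq_sqrt (by norm_num : (0:ℝ) ≤ 2)]

set_option maxHeartbeats 1000000 in
/-- `c(α) ~ √(2α/π)` as `α → 0⁺`, i.e. `c(α)/√α → √(2/π)`. -/
theorem cFun_asymp_zero :
    Tendsto (fun α : ℝ => cFun α / Real.sqrt α) (nhdsWithin 0 (Set.Ioi 0))
      (nhds (Real.sqrt (2 / Real.pi))) := by
  have key : Tendsto
      (fun α : ℝ => ∫ t in Set.Ioc (0:ℝ) 1, erf (Real.sqrt (α / (8 * t))) / Real.sqrt α)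
      (nhdsWithin 0 (Set.Ioi 0))
      (nhds (∫ t in Set.Ioc (0:ℝ) 1, 2 / Real.sqrt Real.pi / Real.sqrt (8 * t))) := by
    refine tendsto_integral_filter_of_dominated_convergence
      (μ := volume.restrict (Set.Ioc (0:ℝ) 1))
      (F := fun (α : ℝ) (t : ℝ) => erf (Real.sqrt (α / (8 * t))) / Real.sqrt α)
      (f := fun t : ℝ => 2 / Real.sqrt Real.pi / Real.sqrt (8 * t))
      (fun t => 2 / Real.sqrt Real.pi / Real.sqrt (8 * t)) ?_ ?_ ?_ ?_
    · filter_upwards with α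
      have hm : Measurable fun t : ℝ => erf (Real.sqrt (α / (8 * t))) / Real.sqrt α := by
        apply Measurable.div_const
        exact erf_continuous.measurable.comp
          ((measurable_const.div ((measurable_const.mul measurable_id))).sqrt)
      exact hm.aestronglyMeasurable
    · filter_upwards [self_mem_nhdsWithin] with α (hα : 0 < α)
      filter_upwards [ae_restrict_mem measurableSet_Ioc] with t ht
      have ht0 : 0 < t := ht.1
      have h8t : (0:ℝ) < 8 * t := by linarith
      have hxnn : 0 ≤ Real.sqrt (α / (8 * t)) := Real.sqrt_nonneg _
      have hsa : 0 < Real.sqrt α := Real.sqrt_pos.2 hα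
      rw [Real.norm_eq_abs, abs_of_nonneg (div_nonneg (erf_nonneg hxnn) hsa.le)]
      have hle : erf (Real.sqrt (α / (8 * t)))
          ≤ 2 / Real.sqrt Real.pi * Real.sqrt (α / (8 * t)) := erf_le hxnn
      have heq : Real.sqrt (α / (8 * t)) = Real.sqrt α / Real.sqrt (8 * t) :=
        Real.sqrt_div hα.le _
      have hle2 : erf (Real.sqrt (α / (8 * t))) / Real.sqrt α
          ≤ 2 / Real.sqrt Real.pi * Real.sqrt (α / (8 * t)) / Real.sqrt α := by gcongr
      refine hle2.trans_eq ?_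
      rw [heq]
      have hb : (0:ℝ) < Real.sqrt (8 * t) := Real.sqrt_pos.2 h8t
      field_simp
    · exact bound_integrableOn
    · filter_upwards [ae_restrict_mem measurableSet_Ioc] with t ht
      exact pointwise_lim ht.1
  rw [integral_bound] at key
  refine key.congr fun α => ?_
  rw [cFun, intervalIntegral.integral_of_le zero_le_one, ← integral_div]
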